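/- The quotient of the monoid of universally convergent basic sequences on the edgeless cube Q_L by ∼, with operation induced by concatenation, is a group extending the group generated by finite basic sequences. Moreover, letting k be the least common multiple of the orders of the elements of the symmetric group S₂₄: for every universally convergent basic sequence σ⃗, the (k−1)-fold self-concatenation σ⃗^{k−1} is universally convergent and represents a two-sided inverse of the class of σ⃗, i.e. σ⃗^{k} ∼ the empty sequence; hence every element of the quotient group has order at most k. -/

import Mathlib

universe u v

namespace InfRubik

/-- The three axes of the cube. -/
inductive Axis : Type
  | x | y | z
  deriving DecidableEq

/-- The six colors of the Rubik's cube.  A *configuration* is a map from cells to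
`Option Color`, where `none` plays the role of the non-color `NaC`. -/
inductive Color : Type
  | red | white | green | orange | yellow | blue
  deriving DecidableEq

/-- The set `L̄† = -L ∪ {0} ∪ L ∪ {±∞}` of extended coordinates. -/
inductive ExtCoord (L : Type u) : Type u
  | neg : L → ExtCoord L
  | zero : ExtCoord L
  | pos : L → ExtCoord L
  | negInf : ExtCoord L
  | posInf : ExtCoord L

namespace ExtCoord

variable {L : Type u}

/-- The reflection `r ↦ -r`. -/
def reflect : ExtCoord L → ExtCoord L
  | .neg r => .pos r
  | .zero => .zero
  | .pos r => .neg r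
  | .negInf => .posInf
  | .posInf => .negInf

@[simp] theorem reflect_reflect (a : ExtCoord L) : a.reflect.reflect = a := by
  cases a <;> rfl

/-- Whether a coordinate is `±∞`. -/
def isInfB : ExtCoord L → Bool
  | .negInf => true
  | .posInf => true
  | _ => false

@[simp] theorem isInfB_reflect (a : ExtCoord L) : a.reflect.isInfB = a.isInfB := by
  cases a <;> rfl

/-- Whether a coordinate is `0`. -/
def isZeroB : ExtCoord L → Bool
  | .zero => true
  | _ => false

@[simp] theorem isZeroB_reflect (a : ExtCoord L) : a.reflect.isZeroB = a.isZeroB := by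
  cases a <;> rfl

end ExtCoord

/-- A point of the ambient space `L̄† × L̄† × L̄†`. -/
abbrev Triple (L : Type u) := ExtCoord L × ExtCoord L × ExtCoord L

/-- The coordinate of a point along an axis. -/
def Triple.coord {L : Type u} : Axis → Triple L → ExtCoord L
  | .x, p => p.1
  | .y, p => p.2.1
  | .z, p => p.2.2

/-- Quarter-turn rotation of the ambient space about an axis (right-hand rule). -/
def rot {L : Type u} : Axis → Triple L → Triple L
  | .x, p => (p.1, p.2.2.reflect, p.2.1)
  | .y, p => (p.2.2, p.2.1, p.1.reflect)
  | .z, p => (p.2.1.reflect, p.1, p.2.2)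

/-- Inverse quarter-turn rotation of the ambient space about an axis. -/
def rotInv {L : Type u} : Axis → Triple L → Triple L
  | .x, p => (p.1, p.2.2, p.2.1.reflect)
  | .y, p => (p.2.2.reflect, p.2.1, p.1)
  | .z, p => (p.2.1, p.1.reflect, p.2.2)

@[simp] theorem rotInv_rot {L : Type u} (i : Axis) (p : Triple L) : rotInv i (rot i p) = p := by
  cases i <;> simp [rot, rotInv]

@[simp] theorem rot_rotInv {L : Type u} (i : Axis) (p : Triple L) : rot i (rotInv i p) = p := by
  cases i <;> simp [rot, rotInv]

/-- The number of infinite coordinates of a point. -/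
def infCount {L : Type u} (p : Triple L) : ℕ :=
  (if p.1.isInfB then 1 else 0) + (if p.2.1.isInfB then 1 else 0) +
    (if p.2.2.isInfB then 1 else 0)

/-- The number of zero coordinates of a point. -/
def zeroCount {L : Type u} (p : Triple L) : ℕ :=
  (if p.1.isZeroB then 1 else 0) + (if p.2.1.isZeroB then 1 else 0) +
    (if p.2.2.isZeroB then 1 else 0)

theorem infCount_rot {L : Type u} (i : Axis) (p : Triple L) : infCount (rot i p) = infCount p := by
  obtain ⟨a, b, c⟩ := p
  cases i <;> cases a <;> cases b <;> cases c <;> rfl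

theorem infCount_rotInv {L : Type u} (i : Axis) (p : Triple L) :
    infCount (rotInv i p) = infCount p := by
  obtain ⟨a, b, c⟩ := p
  cases i <;> cases a <;> cases b <;> cases c <;> rfl

@[simp] theorem coord_rot_self {L : Type u} (i : Axis) (p : Triple L) :
    (rot i p).coord i = p.coord i := by
  cases i <;> rfl

@[simp] theorem coord_rotInv_self {L : Type u} (i : Axis) (p : Triple L) :
    (rotInv i p).coord i = p.coord i := by
  cases i <;> rfl

/-- A cell of the *edgeless* cube `Q_L`: a point of the ambient space with exactly one
infinite coordinate. -/
def Cell (L : Type u) : Type u := {p : Triple L // infCount p = 1}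

open Classical in
/-- The underlying map on points of the quarter-turn twist `T_{i,α}`. -/
noncomputable def qtTriple {L : Type u} (i : Axis) (α : ExtCoord L) (p : Triple L) : Triple L :=
  if p.coord i = α then rot i p else p

open Classical in
/-- The underlying map on points of the inverse quarter-turn twist `T_{i,α}⁻¹`. -/
noncomputable def qtTripleInv {L : Type u} (i : Axis) (α : ExtCoord L) (p : Triple L) : Triple L :=
  if p.coord i = α then rotInv i p else p

theorem qtTripleInv_qtTriple {L : Type u} (i : Axis) (α : ExtCoord L) (p : Triple L) :
    qtTripleInv i α (qtTriple i α p) = p := by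
  classical
  by_cases h : p.coord i = α <;> simp [qtTriple, qtTripleInv, h]

theorem qtTriple_qtTripleInv {L : Type u} (i : Axis) (α : ExtCoord L) (p : Triple L) :
    qtTriple i α (qtTripleInv i α p) = p := by
  classical
  by_cases h : p.coord i = α <;> simp [qtTriple, qtTripleInv, h]

theorem infCount_qtTriple {L : Type u} (i : Axis) (α : ExtCoord L) (p : Triple L) :
    infCount (qtTriple i α p) = infCount p := by
  classical
  by_cases h : p.coord i = α <;> simp [qtTriple, h, infCount_rot]

theorem infCount_qtTripleInv {L : Type u} (i : Axis) (α : ExtCoord L) (p : Triple L) :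
    infCount (qtTripleInv i α p) = infCount p := by
  classical
  by_cases h : p.coord i = α <;> simp [qtTripleInv, h, infCount_rotInv]

/-- The quarter-turn twist `T_{i,α}` of the edgeless cube, as a permutation of cells. -/
noncomputable def quarterTurn {L : Type u} (i : Axis) (α : ExtCoord L) : Equiv.Perm (Cell L) where
  toFun c := ⟨qtTriple i α c.1, by rw [infCount_qtTriple]; exact c.2⟩
  invFun c := ⟨qtTripleInv i α c.1, by rw [infCount_qtTripleInv]; exact c.2⟩
  left_inv c := Subtype.ext (qtTripleInv_qtTriple i α c.1)
  right_inv c := Subtype.ext (qtTriple_qtTripleInv i α c.1)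

/-- The basic twists of the edgeless cube: quarter turns, half turns and reverse
quarter turns of a single layer. -/
def IsBasic (L : Type u) (π : Equiv.Perm (Cell L)) : Prop :=
  ∃ (i : Axis) (α : ExtCoord L),
    π = quarterTurn i α ∨ π = quarterTurn i α ^ 2 ∨ π = (quarterTurn i α)⁻¹

/-! ### The edged cube -/

/-- How a quarter-turn about axis `i` transports the face tag of a cell. -/
def tagMap : Axis → Axis → Axis
  | .x, .x => .x
  | .x, .y => .z
  | .x, .z => .y
  | .y, .x => .z
  | .y, .y => .y
  | .y, .z => .x
  | .z, .x => .y
  | .z, .y => .x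
  | .z, .z => .z

@[simp] theorem tagMap_tagMap (i j : Axis) : tagMap i (tagMap i j) = j := by
  cases i <;> cases j <;> rfl

theorem isInfB_coord_tagMap_rot {L : Type u} (i j : Axis) (p : Triple L) :
    ((rot i p).coord (tagMap i j)).isInfB = (p.coord j).isInfB := by
  cases i <;> cases j <;> simp [rot, Triple.coord, tagMap]

theorem isInfB_coord_tagMap_rotInv {L : Type u} (i j : Axis) (p : Triple L) :
    ((rotInv i p).coord (tagMap i j)).isInfB = (p.coord j).isInfB := by
  cases i <;> cases j <;> simp [rotInv, Triple.coord, tagMap]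

/-- A cell of the *edged* cube `Q̄_L`: a point of the ambient space together with a tag
naming an axis, such that the coordinate along the tagged axis is infinite (the tag
indicates the face to which the cell belongs). -/
def ECell (L : Type u) : Type u := {q : Triple L × Axis // (q.1.coord q.2).isInfB = true}

open Classical in
/-- The underlying map of the quarter-turn twist `T_{i,α}` of the edged cube. -/
noncomputable def eqtFun {L : Type u} (i : Axis) (α : ExtCoord L) (q : Triple L × Axis) :
    Triple L × Axis :=
  if q.1.coord i = α then (rot i q.1, tagMap i q.2) else q

open Classical in
/-- The underlying map of the reverse quarter-turn twist of the edged cube. -/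
noncomputable def eqtFunInv {L : Type u} (i : Axis) (α : ExtCoord L) (q : Triple L × Axis) :
    Triple L × Axis :=
  if q.1.coord i = α then (rotInv i q.1, tagMap i q.2) else q

theorem eqtFunInv_eqtFun {L : Type u} (i : Axis) (α : ExtCoord L) (q : Triple L × Axis) :
    eqtFunInv i α (eqtFun i α q) = q := by
  classical
  by_cases h : q.1.coord i = α <;> simp [eqtFun, eqtFunInv, h]

theorem eqtFun_eqtFunInv {L : Type u} (i : Axis) (α : ExtCoord L) (q : Triple L × Axis) :
    eqtFun i α (eqtFunInv i α q) = q := by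
  classical
  by_cases h : q.1.coord i = α <;> simp [eqtFun, eqtFunInv, h]

theorem isInfB_eqtFun {L : Type u} (i : Axis) (α : ExtCoord L) (q : Triple L × Axis) :
    (((eqtFun i α q).1.coord (eqtFun i α q).2)).isInfB = ((q.1.coord q.2)).isInfB := by
  classical
  by_cases h : q.1.coord i = α <;> simp [eqtFun, h, isInfB_coord_tagMap_rot]

theorem isInfB_eqtFunInv {L : Type u} (i : Axis) (α : ExtCoord L) (q : Triple L × Axis) :
    (((eqtFunInv i α q).1.coord (eqtFunInv i α q).2)).isInfB = ((q.1.coord q.2)).isInfB := by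
  classical
  by_cases h : q.1.coord i = α <;> simp [eqtFunInv, h, isInfB_coord_tagMap_rotInv]

/-- The quarter-turn twist `T_{i,α}` of the edged cube, as a permutation of cells.  A face
twist moves, besides the cells of its face, also the coupled edge and corner cells of the
adjacent faces lying in the twisted layer. -/
noncomputable def equarterTurn {L : Type u} (i : Axis) (α : ExtCoord L) :
    Equiv.Perm (ECell L) where
  toFun c := ⟨eqtFun i α c.1, by rw [isInfB_eqtFun]; exact c.2⟩
  invFun c := ⟨eqtFunInv i α c.1, by rw [isInfB_eqtFunInv]; exact c.2⟩
  left_inv c := Subtype.ext (eqtFunInv_eqtFun i α c.1)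
  right_inv c := Subtype.ext (eqtFun_eqtFunInv i α c.1)

/-- The basic twists of the edged cube. -/
def IsEBasic (L : Type u) (π : Equiv.Perm (ECell L)) : Prop :=
  ∃ (i : Axis) (α : ExtCoord L),
    π = equarterTurn i α ∨ π = equarterTurn i α ^ 2 ∨ π = (equarterTurn i α)⁻¹

/-! ### Transfinite sequences of twists and their action on labellings -/

open Classical in
/-- The eventual value of an ordinal-indexed family of `Option`-values: `some v` if the family
stabilizes on `some v` before `lam`, and `none` otherwise. -/
noncomputable def eventualVal {X : Type u} (lam : Ordinal.{v})
    (g : ∀ η, η < lam → Option X) : Option X :=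
  if h : ∃ v : X, ∃ γ, γ < lam ∧ ∀ η (hη : η < lam), γ ≤ η → g η hη = some v
  then some h.choose else none

/-- Applying an ordinal-indexed sequence of permutations to an initial labelling:
`run σ f0 θ` is the labelling obtained after the first `θ` moves, with
`f_{η+1}(c) = f_η(σ_η⁻¹ c)` at successors and the eventual value (or `NaC = none`)
at limits. -/
noncomputable def run {Cl : Type v} {X : Type u} (σ : Ordinal.{v} → Equiv.Perm Cl)
    (f0 : Cl → Option X) (θ : Ordinal.{v}) : Cl → Option X :=
  Ordinal.limitRecOn (motive := fun _ => Cl → Option X) θ f0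
    (fun η fη c => fη ((σ η)⁻¹ c))
    (fun lam _ prev c => eventualVal lam (fun η h => prev η h c))

/-- A (transfinite) sequence of twists of length `len`, each of which satisfies the
predicate `B` (being a basic twist). -/
structure TwistSeq (Cl : Type v) (B : Equiv.Perm Cl → Prop) : Type (v + 1) where
  len : Ordinal.{v}
  seq : Ordinal.{v} → Equiv.Perm Cl
  basic : ∀ η, η < len → B (seq η)

namespace TwistSeq

variable {Cl : Type v} {B : Equiv.Perm Cl → Prop}

/-- The terminal labelling obtained by applying a sequence of twists to `f0`. -/
noncomputable def terminal (s : TwistSeq Cl B) {X : Type u} (f0 : Cl → Option X) :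
    Cl → Option X :=
  run s.seq f0 s.len

/-- A sequence of twists is convergent over `f0` if the terminal labelling is legal,
i.e. never takes the value `NaC = none`. -/
def ConvOver (s : TwistSeq Cl B) {X : Type u} (f0 : Cl → Option X) : Prop :=
  ∀ c, s.terminal f0 c ≠ none

/-- A sequence of twists is universally convergent if it is convergent over the identity
labelling. -/
def UnivConv (s : TwistSeq Cl B) : Prop := s.ConvOver (fun c => some c)

/-- A sequence is twist-finite if each twist occurs in it only finitely many times. -/
def TwistFinite (s : TwistSeq Cl B) : Prop :=
  ∀ π : Equiv.Perm Cl, {η : Ordinal | η < s.len ∧ s.seq η = π}.Finite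

/-- Two sequences are equivalent, `σ⃗ ∼ τ⃗`, when they produce the same terminal
configuration over every initial configuration. -/
def Sim (s t : TwistSeq Cl B) : Prop :=
  ∀ f : Cl → Option Color, s.terminal f = t.terminal f

/-- Concatenation of twist sequences: `s.concat t` performs `s` and then `t`. -/
noncomputable def concat (s t : TwistSeq Cl B) : TwistSeq Cl B where
  len := s.len + t.len
  seq := fun η => if η < s.len then s.seq η else t.seq (η - s.len)
  basic := by
    intro η hη
    by_cases h : η < s.len
    · simpa [h] using s.basic η h
    · have hc : 0 < t.len := by
        rcases eq_zero_or_pos t.len with h0 | h0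
        · rw [h0, add_zero] at hη; exact absurd hη h
        · exact h0
      have h2 : η - s.len < t.len := Ordinal.sub_lt_of_lt_add hη hc
      simpa [h] using t.basic _ h2

/-- The empty sequence of twists. -/
def empty (Cl : Type v) (B : Equiv.Perm Cl → Prop) : TwistSeq Cl B where
  len := 0
  seq := fun _ => 1
  basic := fun η hη => absurd hη (by simp)

/-- `n`-fold self-concatenation of a sequence of twists. -/
noncomputable def npow (s : TwistSeq Cl B) : ℕ → TwistSeq Cl B
  | 0 => empty Cl B
  | n + 1 => (npow s n).concat s

end TwistSeq

/-- Basic sequences of twists of the edgeless cube `Q_L`. -/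
abbrev BasicSeq (L : Type u) := TwistSeq (Cell L) (IsBasic L)

/-- Basic sequences of twists of the edged cube `Q̄_L`. -/
abbrev EBasicSeq (L : Type u) := TwistSeq (ECell L) (IsEBasic L)

/-- `f` is accessible from `f0` when some basic sequence applied to `f0` is convergent with
terminal configuration `f`. -/
def Accessible {Cl : Type v} (B : Equiv.Perm Cl → Prop) (f0 f : Cl → Option Color) : Prop :=
  ∃ s : TwistSeq Cl B, s.ConvOver f0 ∧ s.terminal f0 = f

/-- A labelling is legal if it never takes the value `NaC = none`. -/
def IsLegal {Cl : Type v} {X : Type u} (f : Cl → Option X) : Prop := ∀ c, f c ≠ none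

/-! ### Clusters, faces, and distinguished configurations -/

/-- The group of permutations of cells of the edgeless cube generated by the basic twists. -/
def twistGroup (L : Type u) : Subgroup (Equiv.Perm (Cell L)) :=
  Subgroup.closure {π | IsBasic L π}

/-- The cluster of a cell of the edgeless cube: its orbit under the group generated by the
basic twists. -/
def cluster {L : Type u} (c : Cell L) : Set (Cell L) :=
  {d | ∃ g ∈ twistGroup L, g c = d}

/-- The group of permutations of cells of the edged cube generated by the basic twists. -/
def etwistGroup (L : Type u) : Subgroup (Equiv.Perm (ECell L)) :=
  Subgroup.closure {π | IsEBasic L π}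

/-- The cluster of a cell of the edged cube. -/
def ecluster {L : Type u} (c : ECell L) : Set (ECell L) :=
  {d | ∃ g ∈ etwistGroup L, g c = d}

open Classical in
/-- The solved configuration of the edgeless cube: each face gets one of six distinct
colors. -/
noncomputable def fSolved (L : Type u) : Cell L → Option Color := fun c =>
  if c.1.1 = ExtCoord.posInf then some .red
  else if c.1.1 = ExtCoord.negInf then some .orange
  else if c.1.2.1 = ExtCoord.posInf then some .blue
  else if c.1.2.1 = ExtCoord.negInf then some .green
  else if c.1.2.2 = ExtCoord.posInf then some .white
  else some .yellow

/-- The color of each face: the face is named by the axis and the sign (`true` = `+∞`). -/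
def faceColor : Axis → Bool → Color
  | .x, true => .red
  | .x, false => .orange
  | .y, true => .blue
  | .y, false => .green
  | .z, true => .white
  | .z, false => .yellow

open Classical in
/-- The solved configuration of the edged cube. -/
noncomputable def efSolved (L : Type u) : ECell L → Option Color := fun c =>
  if c.1.1.coord c.1.2 = ExtCoord.posInf then some (faceColor c.1.2 true)
  else some (faceColor c.1.2 false)

/-- A center cell of the edgeless cube: two of its coordinates are `0`. -/
def IsCenter {L : Type u} (c : Cell L) : Prop := zeroCount c.1 = 2

/-- The global rotation of the whole cube about an axis, as a permutation of the cells of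
the edgeless cube. -/
def rotAllPerm {L : Type u} (i : Axis) : Equiv.Perm (Cell L) where
  toFun c := ⟨rot i c.1, by rw [infCount_rot]; exact c.2⟩
  invFun c := ⟨rotInv i c.1, by rw [infCount_rotInv]; exact c.2⟩
  left_inv c := Subtype.ext (rotInv_rot i c.1)
  right_inv c := Subtype.ext (rot_rotInv i c.1)

/-- The group of global rotations of the edgeless cube. -/
def rotGroup (L : Type u) : Subgroup (Equiv.Perm (Cell L)) :=
  Subgroup.closure (Set.range (rotAllPerm (L := L)))

/-- A configuration of the edgeless cube is standard if every non-center cluster contains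
exactly four cells of each of the six colors, and its restriction to the center cluster is
obtained from the solved configuration by a global rotation of the cube. -/
def Standard {L : Type u} (f : Cell L → Option Color) : Prop :=
  (∀ c : Cell L, ¬IsCenter c → ∀ γ : Color, {d ∈ cluster c | f d = some γ}.ncard = 4) ∧
  ∃ g ∈ rotGroup L, ∀ d : Cell L, IsCenter d → f d = fSolved L (g⁻¹ d)

/-- A configuration is invariant under all quarter-turn face twists. -/
def FaceInvariant {L : Type u} (f : Cell L → Option Color) : Prop :=
  ∀ (i : Axis) (α : ExtCoord L), α.isInfB = true →
    ∀ c : Cell L, f ((quarterTurn i α)⁻¹ c) = f c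

/-! ### Quadrants and cluster configurations -/

/-- The upper-right quadrant `D` of the Front face: the cells `(x, y, +∞)` with `x ∈ L`
and `y ∈ {0} ∪ L`; every non-center cluster has a unique representative in `D`. -/
def Dset (L : Type u) : Set (Cell L) :=
  {c | ∃ (a : L) (b : ExtCoord L), (b = ExtCoord.zero ∨ ∃ r : L, b = ExtCoord.pos r) ∧
    c.1 = (ExtCoord.pos a, b, ExtCoord.posInf)}

/-- Two cells lie in the same face quadrant (an image of `D` under a global rotation). -/
def SameQuadrant {L : Type u} (d d' : Cell L) : Prop :=
  ∃ g ∈ rotGroup L, d ∈ (fun c => g c) '' Dset L ∧ d' ∈ (fun c => g c) '' Dset L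

/-! ### Coupled cells of the edged cube -/

/-- Two cells of the edged cube are coupled if they occupy the same location but belong to
different faces (they are parts of a common edge or corner cubie). -/
def Coupled {L : Type u} (c c' : ECell L) : Prop := c.1.1 = c'.1.1 ∧ c.1.2 ≠ c'.1.2

/-- An edge cell: exactly two infinite coordinates. -/
def IsEdgeCell {L : Type u} (c : ECell L) : Prop := infCount c.1.1 = 2

/-- A corner cell: three infinite coordinates. -/
def IsCornerCell {L : Type u} (c : ECell L) : Prop := infCount c.1.1 = 3

/-- An edge-cross cell: an edge cell one of whose coordinates is `0`. -/
def IsEdgeCross {L : Type u} (c : ECell L) : Prop :=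
  IsEdgeCell c ∧ 0 < zeroCount c.1.1

end InfRubik
namespace RubikAux
open InfRubik

universe u' v' w'
variable {Cl : Type v'} {X : Type u'}

theorem opt_ext {a b : Option X} (h : ∀ v : X, a = some v ↔ b = some v) : a = b := by
  cases a with
  | none => cases b with
    | none => rfl
    | some v => exact ((h v).2 rfl)
  | some v => exact ((h v).1 rfl).symm

theorem eventualVal_eq_some_iff {lam : Ordinal.{w'}} {g : ∀ η, η < lam → Option X} {v : X} :
    eventualVal lam g = some v ↔
      ∃ γ, γ < lam ∧ ∀ η (hη : η < lam), γ ≤ η → g η hη = some v := by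
  unfold eventualVal
  split_ifs with h
  · simp only [Option.some_inj]
    constructor
    · rintro rfl; exact h.choose_spec
    · rintro ⟨γ, hγ, H⟩
      obtain ⟨γ', hγ', H'⟩ := h.choose_spec
      have hmax : max γ γ' < lam := max_lt hγ hγ'
      have h1 := H _ hmax (le_max_left _ _)
      have h2 := H' _ hmax (le_max_right _ _)
      rw [h1] at h2; exact (Option.some_inj.1 h2).symm
  · constructor
    · intro hc; exact absurd hc (by simp)
    · rintro ⟨γ, hγ, H⟩; exact absurd ⟨v, γ, hγ, H⟩ h

theorem run_zero (σ : Ordinal.{v'} → Equiv.Perm Cl) (f : Cl → Option X) :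
    run σ f 0 = f :=
  Ordinal.limitRecOn_zero _ _ _

theorem run_succ (σ : Ordinal.{v'} → Equiv.Perm Cl) (f : Cl → Option X) (η : Ordinal.{v'}) :
    run σ f (η + 1) = fun c => run σ f η ((σ η)⁻¹ c) := by
  show run σ f (Order.succ η) = _
  exact Ordinal.limitRecOn_succ _ _ _ _

theorem run_succ_apply (σ : Ordinal.{v'} → Equiv.Perm Cl) (f : Cl → Option X) (η : Ordinal.{v'})
    (c : Cl) : run σ f (η + 1) c = run σ f η ((σ η)⁻¹ c) := by
  rw [run_succ]

theorem run_limit (σ : Ordinal.{v'} → Equiv.Perm Cl) (f : Cl → Option X) {lam : Ordinal.{v'}}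
    (h : Order.IsSuccLimit lam) :
    run σ f lam = fun c => eventualVal lam (fun η _ => run σ f η c) :=
  Ordinal.limitRecOn_limit _ _ _ _ h

theorem run_limit_apply (σ : Ordinal.{v'} → Equiv.Perm Cl) (f : Cl → Option X)
    {lam : Ordinal.{v'}} (h : Order.IsSuccLimit lam) (c : Cl) :
    run σ f lam c = eventualVal lam (fun η _ => run σ f η c) := by
  rw [run_limit _ _ h]

end RubikAux
namespace RubikAux2
open InfRubik RubikAux

universe u' v'
variable {Cl : Type v'} {X : Type u'}

theorem run_congr (σ τ : Ordinal.{v'} → Equiv.Perm Cl) (f : Cl → Option X) (θ : Ordinal.{v'})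
    (hagree : ∀ η, η < θ → σ η = τ η) :
    ∀ δ, δ ≤ θ → run σ f δ = run τ f δ := by
  intro δ
  induction δ using Ordinal.limitRecOn with
  | zero => intro _; rw [run_zero, run_zero]
  | add_one δ ih =>
    intro hle
    have hδθ : δ < θ := (Order.succ_le_iff).1 hle
    rw [run_succ, run_succ, ih hδθ.le, hagree δ hδθ]
  | limit lam hlam ih =>
    intro hle
    funext c
    rw [run_limit_apply _ _ hlam, run_limit_apply _ _ hlam]
    have : (fun η (h : η < lam) => run σ f η c) = fun η (h : η < lam) => run τ f η c := by
      funext η h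
      rw [ih η h ((h.le).trans hle)]
    rw [this]

theorem eventualVal_add {a lam : Ordinal.{v'}} (hlam : Order.IsSuccLimit lam)
    (G : ∀ η, η < a + lam → Option X) :
    eventualVal (a + lam) G =
      eventualVal lam (fun η hη => G (a + η) ((add_lt_add_iff_left (a := a)).2 hη)) := by
  apply opt_ext
  intro v
  rw [eventualVal_eq_some_iff, eventualVal_eq_some_iff]
  constructor
  · rintro ⟨γ, hγ, H⟩
    refine ⟨γ - a, Ordinal.sub_lt_of_lt_add hγ hlam.pos, fun η hη hge => ?_⟩
    exact H (a + η) _ ((Ordinal.le_add_sub γ a).trans (add_le_add_right hge a))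
  · rintro ⟨γ, hγ, H⟩
    refine ⟨a + γ, (add_lt_add_iff_left (a := a)).2 hγ, fun η' hη' hge => ?_⟩
    have ha : a ≤ η' := (le_self_add (a := a) (b := γ)).trans hge
    have he : a + (η' - a) = η' := Ordinal.add_sub_cancel_of_le ha
    have h1 : η' - a < lam := by
      rw [← add_lt_add_iff_left (a := a), he]; exact hη'
    have h2 : γ ≤ η' - a := by
      rw [← add_le_add_iff_left (a := a), he]; exact hge
    have := H (η' - a) h1 h2
    convert this using 2
    exact he.symm

theorem run_add (σ : Ordinal.{v'} → Equiv.Perm Cl) (f : Cl → Option X) (a : Ordinal.{v'}) :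
    ∀ δ, run σ f (a + δ) = run (fun η => σ (a + η)) (run σ f a) δ := by
  intro δ
  induction δ using Ordinal.limitRecOn with
  | zero => rw [add_zero, run_zero]
  | add_one δ ih =>
    rw [← add_assoc, run_succ, run_succ, ih]
  | limit lam hlam ih =>
    funext c
    rw [run_limit_apply _ _ (Ordinal.isSuccLimit_add a hlam), run_limit_apply _ _ hlam,
      eventualVal_add hlam]
    have : (fun η (hη : η < lam) => run σ f (a + η) c)
        = fun η (hη : η < lam) => run (fun η => σ (a + η)) (run σ f a) η c := by
      funext η hη
      rw [ih η hη]
    rw [this]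

theorem terminal_concat {B : Equiv.Perm Cl → Prop} (s t : TwistSeq Cl B) (f : Cl → Option X) :
    (s.concat t).terminal f = t.terminal (s.terminal f) := by
  show run (s.concat t).seq f (s.len + t.len) = run t.seq (run s.seq f s.len) t.len
  rw [run_add]
  have h1 : run (s.concat t).seq f s.len = run s.seq f s.len := by
    apply run_congr _ _ _ s.len _ _ le_rfl
    intro η hη
    simp [TwistSeq.concat, hη]
  rw [h1]
  apply run_congr _ _ _ t.len _ _ le_rfl
  intro η hη
  simp only [TwistSeq.concat]
  rw [if_neg (not_lt.2 le_self_add), Ordinal.add_sub_cancel]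

/-- Lemma 4: transport of the identity run to arbitrary labellings. -/
theorem run_eq_of_idrun (σ : Ordinal.{v'} → Equiv.Perm Cl) :
    ∀ (η : Ordinal.{v'}) (c d : Cl), run σ (fun x => some x) η c = some d →
      ∀ (f : Cl → Option X), run σ f η c = f d := by
  intro η
  induction η using Ordinal.limitRecOn with
  | zero =>
    intro c d h f
    rw [run_zero] at h
    rw [run_zero]
    exact (congrArg f (Option.some_inj.1 h))
  | add_one η ih =>
    intro c d h f
    rw [run_succ_apply] at h ⊢
    exact ih _ _ h f
  | limit lam hlam ih =>
    intro c d h f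
    rw [run_limit_apply _ _ hlam] at h ⊢
    rw [eventualVal_eq_some_iff] at h
    obtain ⟨γ, hγ, H⟩ := h
    cases hfd : f d with
    | some v =>
      rw [eventualVal_eq_some_iff]
      exact ⟨γ, hγ, fun η hη hge => by rw [ih η hη _ _ (H η hη hge) f, hfd]⟩
    | none =>
      apply opt_ext
      intro v
      simp only [eventualVal_eq_some_iff]
      constructor
      · rintro ⟨γ', hγ', H'⟩
        have hmax : max γ γ' < lam := max_lt hγ hγ'
        have h1 := H' _ hmax (le_max_right _ _)
        rw [ih _ hmax _ _ (H _ hmax (le_max_left _ _)) f, hfd] at h1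
        exact absurd h1 (by simp)
      · intro hc; exact absurd hc (by simp)

theorem terminal_eq {B : Equiv.Perm Cl → Prop} (s : TwistSeq Cl B) {c d : Cl}
    (h : s.terminal (fun x => some x) c = some d) (f : Cl → Option X) :
    s.terminal f c = f d :=
  run_eq_of_idrun s.seq s.len c d h f

end RubikAux2
namespace RubikAux3
open InfRubik RubikAux RubikAux2

universe u' v'
variable {Cl : Type v'}

/-- Stabilization on a finite invariant set at a limit stage. -/
theorem stab (σ : Ordinal.{v'} → Equiv.Perm Cl) {lam : Ordinal.{v'}} (hlam : Order.IsSuccLimit lam)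
    (K : Set Cl) (hK : K.Finite)
    (hleg : ∀ c ∈ K, run σ (fun x => some x) lam c ≠ none) :
    ∃ γ, γ < lam ∧ ∀ c ∈ K, ∀ η, γ ≤ η → η < lam →
      run σ (fun x => some x) η c = run σ (fun x => some x) lam c := by
  classical
  have hst : ∀ c : hK.toFinset, ∃ γ, γ < lam ∧ ∀ η, γ ≤ η → η < lam →
      run σ (fun x => some x) η (c : Cl) = run σ (fun x => some x) lam (c : Cl) := by
    rintro ⟨c, hc⟩
    have hc' : c ∈ K := hK.mem_toFinset.1 hc
    obtain ⟨d, hd⟩ := Option.ne_none_iff_exists'.mp (hleg c hc')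
    have hd' := hd
    rw [run_limit_apply _ _ hlam, eventualVal_eq_some_iff] at hd'
    obtain ⟨γ, hγ, H⟩ := hd'
    exact ⟨γ, hγ, fun η hge hη => by rw [H η hη hge, hd]⟩
  choose g hg1 hg2 using hst
  refine ⟨Finset.univ.sup g, ?_, ?_⟩
  · rw [Finset.sup_lt_iff (by simpa [Ordinal.bot_eq_zero] using hlam.pos)]
    exact fun c _ => hg1 c
  · intro c hc η hge hη
    have hcm : c ∈ hK.toFinset := hK.mem_toFinset.2 hc
    exact hg2 ⟨c, hcm⟩ η (le_trans (Finset.le_sup (Finset.mem_univ _)) hge) hη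

/-- Persistence of illegality on a finite invariant set. -/
theorem persist (σ : Ordinal.{v'} → Equiv.Perm Cl) (θ : Ordinal.{v'}) (K : Set Cl)
    (hK : K.Finite)
    (hmv : ∀ η, η < θ → ∀ c ∈ K, σ η c ∈ K ∧ (σ η)⁻¹ c ∈ K) :
    ∀ η', η' ≤ θ → ∀ η, η ≤ η' →
      (∃ c ∈ K, run σ (fun x => some x) η c = none) →
      ∃ c ∈ K, run σ (fun x => some x) η' c = none := by
  intro η'
  induction η' using Ordinal.limitRecOn with
  | zero =>
    intro _ η hη hex
    rw [nonpos_iff_eq_zero.1 hη] at hex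
    exact hex
  | add_one η' ih =>
    intro hθ η hη hex
    rcases eq_or_lt_of_le hη with rfl | hlt
    · exact hex
    obtain ⟨c, hc, hnone⟩ := ih ((Order.le_succ η').trans hθ) η (Order.lt_succ_iff.1 hlt) hex
    have hη'θ : η' < θ := Order.succ_le_iff.1 hθ
    refine ⟨σ η' c, (hmv η' hη'θ c hc).1, ?_⟩
    rw [run_succ_apply, Equiv.Perm.inv_def, Equiv.symm_apply_apply]
    exact hnone
  | limit lam hlam ih =>
    intro hθ η hη hex
    rcases eq_or_lt_of_le hη with rfl | hlt
    · exact hex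
    by_contra hno
    push_neg at hno
    obtain ⟨γ0, hγ0, hstab⟩ := stab σ hlam K hK hno
    have hmlt : max η γ0 < lam := max_lt hlt hγ0
    obtain ⟨c, hc, hnone⟩ := ih (max η γ0) hmlt (hmlt.le.trans hθ) η (le_max_left _ _) hex
    have := hstab c hc (max η γ0) (le_max_right _ _) hmlt
    rw [hnone] at this
    exact hno c hc this.symm

/-- The identity run is a bijection of each finite invariant legal set at every stage. -/
theorem exists_bij (σ : Ordinal.{v'} → Equiv.Perm Cl) (θ : Ordinal.{v'}) (K : Set Cl)
    (hK : K.Finite)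
    (hmv : ∀ η, η < θ → ∀ c ∈ K, σ η c ∈ K ∧ (σ η)⁻¹ c ∈ K)
    (hleg : ∀ η, η ≤ θ → ∀ c ∈ K, run σ (fun x => some x) η c ≠ none) :
    ∀ η, η ≤ θ → ∃ e : Cl → Cl, Set.BijOn e K K ∧
      ∀ c ∈ K, run σ (fun x => some x) η c = some (e c) := by
  intro η
  induction η using Ordinal.limitRecOn with
  | zero =>
    intro _
    exact ⟨id, Set.bijOn_id K, fun c hc => by rw [run_zero]; rfl⟩
  | add_one η ih =>
    intro hθ
    obtain ⟨e, hbij, hval⟩ := ih ((Order.le_succ η).trans hθ)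
    have hηθ : η < θ := Order.succ_le_iff.1 hθ
    have hbinv : Set.BijOn (⇑(σ η)⁻¹) K K := by
      refine ⟨fun c hc => (hmv η hηθ c hc).2, (Equiv.injective _).injOn, fun c hc => ?_⟩
      exact ⟨σ η c, (hmv η hηθ c hc).1, by simp⟩
    refine ⟨e ∘ ⇑(σ η)⁻¹, hbij.comp hbinv, fun c hc => ?_⟩
    rw [run_succ_apply]
    exact hval _ ((hmv η hηθ c hc).2)
  | limit lam hlam ih =>
    intro hθ
    obtain ⟨γ0, hγ0, hstab⟩ := stab σ hlam K hK (hleg lam hθ)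
    obtain ⟨e, hbij, hval⟩ := ih γ0 hγ0 (hγ0.le.trans hθ)
    refine ⟨e, hbij, fun c hc => ?_⟩
    rw [← hstab c hc γ0 le_rfl hγ0]
    exact hval c hc

/-- Any self-map agreeing on a finite invariant set of size at most 24 with a bijection
of that set has `k`-th iterate the identity there. -/
theorem iterate_eq_id (k : ℕ)
    (hk : k = (Finset.univ : Finset (Equiv.Perm (Fin 24))).lcm orderOf)
    (K : Set Cl) (hfin : K.Finite) (hcard : K.ncard ≤ 24) (e H : Cl → Cl)
    (he : Set.BijOn e K K) (hHe : ∀ c ∈ K, H c = e c) :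
    ∀ c ∈ K, H^[k] c = c := by
  classical
  haveI : Fintype ↥K := hfin.fintype
  have hcard' : Fintype.card ↥K ≤ 24 := by
    rw [← Set.toFinset_card, ← Set.ncard_eq_toFinset_card']
    exact hcard
  have hinj : Function.Injective (fun x : ↥K => (⟨e x, he.mapsTo x.2⟩ : ↥K)) := by
    intro a b hab
    exact Subtype.ext (he.injOn a.2 b.2 (congrArg Subtype.val hab))
  have hsurj : Function.Surjective (fun x : ↥K => (⟨e x, he.mapsTo x.2⟩ : ↥K)) := by
    rintro ⟨y, hy⟩
    obtain ⟨x, hx, hxy⟩ := he.surjOn hy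
    exact ⟨⟨x, hx⟩, Subtype.ext hxy⟩
  let F : Equiv.Perm ↥K := Equiv.ofBijective _ ⟨hinj, hsurj⟩
  have hFval : ∀ x : ↥K, ((F x : ↥K) : Cl) = e x := fun x => rfl
  let emb : ↥K ↪ Fin 24 := (Fintype.equivFin ↥K).toEmbedding.trans (Fin.castLEEmb hcard')
  have horder : orderOf F = orderOf (Equiv.Perm.viaEmbeddingHom emb F) :=
    (orderOf_injective _ (Equiv.Perm.viaEmbeddingHom_injective emb) F).symm
  have hdvd : orderOf F ∣ k := by
    rw [horder, hk]
    exact Finset.dvd_lcm (Finset.mem_univ _)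
  have hFk : F ^ k = 1 := orderOf_dvd_iff_pow_eq_one.1 hdvd
  have key : ∀ (n : ℕ) (c : Cl) (hc : c ∈ K), H^[n] c = ((F ^ n) ⟨c, hc⟩ : ↥K).1 := by
    intro n
    induction n with
    | zero => intro c hc; simp
    | succ n ihn =>
      intro c hc
      rw [Function.iterate_succ_apply', ihn c hc]
      have hmem := ((F ^ n) ⟨c, hc⟩).2
      rw [hHe _ hmem]
      rw [pow_succ' F n, Equiv.Perm.mul_apply]
      rfl
  intro c hc
  rw [key k c hc, hFk]
  rfl

end RubikAux3
namespace RubikAux4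
open InfRubik RubikAux RubikAux2 RubikAux3

universe u' v'

/-- Signed axis-permutation data for a rotation of the ambient space. -/
abbrev Rot : Type := Fin 3 → Fin 3 × Bool

/-- Conditional reflection. -/
def condRefl {L : Type u'} (b : Bool) (x : ExtCoord L) : ExtCoord L :=
  if b then x.reflect else x

@[simp] theorem condRefl_condRefl {L : Type u'} (a b : Bool) (x : ExtCoord L) :
    condRefl a (condRefl b x) = condRefl (xor a b) x := by
  cases a <;> cases b <;> simp [condRefl]

/-- The coordinates of a triple as a function on `Fin 3`. -/
def tget {L : Type u'} (p : Triple L) : Fin 3 → ExtCoord L := ![p.1, p.2.1, p.2.2]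

/-- The action of rotation data on triples. -/
def ract {L : Type u'} (r : Rot) (p : Triple L) : Triple L :=
  (condRefl (r 0).2 (tget p (r 0).1), condRefl (r 1).2 (tget p (r 1).1),
    condRefl (r 2).2 (tget p (r 2).1))

@[simp] theorem tget_ract {L : Type u'} (r : Rot) (p : Triple L) (j : Fin 3) :
    tget (ract r p) j = condRefl (r j).2 (tget p (r j).1) := by
  fin_cases j <;> rfl

/-- Composition of rotation data: `ract (rmul a b) = ract a ∘ ract b`. -/
def rmul (a b : Rot) : Rot := fun j => ((b (a j).1).1, xor (a j).2 (b (a j).1).2)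

theorem ract_rmul {L : Type u'} (a b : Rot) (p : Triple L) :
    ract (rmul a b) p = ract a (ract b p) := by
  have h : ∀ j : Fin 3, tget (ract (rmul a b) p) j = tget (ract a (ract b p)) j := by
    intro j
    rw [tget_ract, tget_ract, tget_ract, condRefl_condRefl]
    rfl
  have h0 := h 0; have h1 := h 1; have h2 := h 2
  simp only [tget, Matrix.cons_val_zero, Matrix.cons_val_one, Matrix.head_cons,
    Matrix.cons_val_two, Matrix.tail_cons] at h0 h1 h2
  exact Prod.ext h0 (Prod.ext h1 h2)

/-- The rotation data of the three quarter-turn rotations. -/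
def rotR : Axis → Rot
  | .x => ![(0, false), (2, true), (1, false)]
  | .y => ![(2, false), (1, false), (0, true)]
  | .z => ![(1, true), (0, false), (2, false)]

/-- The rotation data of the three inverse quarter-turn rotations. -/
def rotInvR : Axis → Rot
  | .x => ![(0, false), (2, false), (1, true)]
  | .y => ![(2, true), (1, false), (0, false)]
  | .z => ![(1, false), (0, true), (2, false)]

theorem ract_rotR {L : Type u'} (i : Axis) (p : Triple L) : ract (rotR i) p = rot i p := by
  cases i <;> rfl

theorem ract_rotInvR {L : Type u'} (i : Axis) (p : Triple L) :
    ract (rotInvR i) p = rotInv i p := by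
  cases i <;> rfl

def goodList : List Rot :=
  [![(0, false), (1, false), (2, false)],
   ![(0, true), (1, true), (2, false)],
   ![(0, true), (1, false), (2, true)],
   ![(0, false), (1, true), (2, true)],
   ![(1, false), (2, false), (0, false)],
   ![(1, true), (2, true), (0, false)],
   ![(1, true), (2, false), (0, true)],
   ![(1, false), (2, true), (0, true)],
   ![(2, false), (0, false), (1, false)],
   ![(2, true), (0, true), (1, false)],
   ![(2, true), (0, false), (1, true)],
   ![(2, false), (0, true), (1, true)],
   ![(0, true), (2, false), (1, false)],
   ![(0, false), (2, true), (1, false)],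
   ![(0, false), (2, false), (1, true)],
   ![(0, true), (2, true), (1, true)],
   ![(1, true), (0, false), (2, false)],
   ![(1, false), (0, true), (2, false)],
   ![(1, false), (0, false), (2, true)],
   ![(1, true), (0, true), (2, true)],
   ![(2, true), (1, false), (0, false)],
   ![(2, false), (1, true), (0, false)],
   ![(2, false), (1, false), (0, true)],
   ![(2, true), (1, true), (0, true)]]

theorem idRot_mem : (![(0, false), (1, false), (2, false)] : Rot) ∈ goodList := by decide

theorem ract_idRot {L : Type u'} (p : Triple L) :
    ract (![(0, false), (1, false), (2, false)] : Rot) p = p := rfl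

set_option maxRecDepth 10000 in
theorem good_mul_rotR : ∀ i : Axis, ∀ r ∈ goodList, rmul (rotR i) r ∈ goodList := by
  intro i
  cases i <;> decide

set_option maxRecDepth 10000 in
theorem good_mul_rotInvR : ∀ i : Axis, ∀ r ∈ goodList, rmul (rotInvR i) r ∈ goodList := by
  intro i
  cases i <;> decide

end RubikAux4
namespace RubikAux5
open InfRubik RubikAux RubikAux2 RubikAux3 RubikAux4

universe u'
variable {L : Type u'}

/-- The 24-element invariant superset of the cluster of a cell. -/
def KCset (c0 : Cell L) : Set (Cell L) := {d | ∃ r ∈ goodList, d.1 = ract r c0.1}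

theorem mem_KCset_self (c0 : Cell L) : c0 ∈ KCset c0 :=
  ⟨_, idRot_mem, (ract_idRot c0.1).symm⟩

theorem KCset_finite_card (c0 : Cell L) :
    (KCset c0).Finite ∧ (KCset c0).ncard ≤ 24 := by
  classical
  have hψ : ∀ d : ↥(KCset c0), ∃ r : {r : Rot // r ∈ goodList}, (d : Cell L).1 = ract r.1 c0.1 := by
    rintro ⟨d, r, hr, hd⟩
    exact ⟨⟨r, hr⟩, hd⟩
  choose φ hφ using hψ
  have hinj : Function.Injective φ := by
    intro a b hab
    apply Subtype.ext
    apply Subtype.ext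
    rw [hφ a, hφ b, hab]
  have hidx : Function.Injective (fun r : {r : Rot // r ∈ goodList} =>
      (⟨goodList.idxOf r.1, by
        have := List.idxOf_lt_length_iff.2 r.2
        simpa [goodList] using this⟩ : Fin 24)) := by
    intro a b hab
    apply Subtype.ext
    have h := congrArg Fin.val hab
    simp only at h
    exact (List.idxOf_inj a.2).1 h
  have hinj2 := hidx.comp hinj
  haveI : Finite ↥(KCset c0) := Finite.of_injective _ hinj2
  constructor
  · exact Set.toFinite _
  · rw [← Nat.card_coe_set_eq]
    calc Nat.card ↥(KCset c0) ≤ Nat.card (Fin 24) := Nat.card_le_card_of_injective _ hinj2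
    _ = 24 := by simp

section Ptr

variable (c0 : Cell L)

theorem Ptr_rot {p : Triple L} (i : Axis) (h : ∃ r ∈ goodList, p = ract r c0.1) :
    ∃ r ∈ goodList, rot i p = ract r c0.1 := by
  obtain ⟨r, hr, rfl⟩ := h
  exact ⟨rmul (rotR i) r, good_mul_rotR i r hr, by rw [ract_rmul, ract_rotR]⟩

theorem Ptr_rotInv {p : Triple L} (i : Axis) (h : ∃ r ∈ goodList, p = ract r c0.1) :
    ∃ r ∈ goodList, rotInv i p = ract r c0.1 := by
  obtain ⟨r, hr, rfl⟩ := h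
  exact ⟨rmul (rotInvR i) r, good_mul_rotInvR i r hr, by rw [ract_rmul, ract_rotInvR]⟩

theorem Ptr_qt {p : Triple L} (i : Axis) (α : ExtCoord L)
    (h : ∃ r ∈ goodList, p = ract r c0.1) :
    ∃ r ∈ goodList, qtTriple i α p = ract r c0.1 := by
  classical
  unfold qtTriple
  split_ifs
  · exact Ptr_rot c0 i h
  · exact h

theorem Ptr_qtInv {p : Triple L} (i : Axis) (α : ExtCoord L)
    (h : ∃ r ∈ goodList, p = ract r c0.1) :
    ∃ r ∈ goodList, qtTripleInv i α p = ract r c0.1 := by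
  classical
  unfold qtTripleInv
  split_ifs
  · exact Ptr_rotInv c0 i h
  · exact h

theorem mem_KCset_qt {d : Cell L} (i : Axis) (α : ExtCoord L) (hd : d ∈ KCset c0) :
    quarterTurn i α d ∈ KCset c0 :=
  Ptr_qt c0 i α hd

theorem mem_KCset_qtInv {d : Cell L} (i : Axis) (α : ExtCoord L) (hd : d ∈ KCset c0) :
    (quarterTurn i α)⁻¹ d ∈ KCset c0 :=
  Ptr_qtInv c0 i α hd

/-- Each basic twist and its inverse preserve `KCset c0`. -/
theorem KC_basic (π : Equiv.Perm (Cell L)) (h : IsBasic L π) :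
    ∀ d ∈ KCset c0, π d ∈ KCset c0 ∧ π⁻¹ d ∈ KCset c0 := by
  obtain ⟨i, α, hπ | hπ | hπ⟩ := h <;> subst hπ <;> intro d hd
  · exact ⟨mem_KCset_qt c0 i α hd, mem_KCset_qtInv c0 i α hd⟩
  · constructor
    · rw [sq, Equiv.Perm.mul_apply]
      exact mem_KCset_qt c0 i α (mem_KCset_qt c0 i α hd)
    · rw [← inv_pow, sq, Equiv.Perm.mul_apply]
      exact mem_KCset_qtInv c0 i α (mem_KCset_qtInv c0 i α hd)
  · rw [inv_inv]
    exact ⟨mem_KCset_qtInv c0 i α hd, mem_KCset_qt c0 i α hd⟩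

end Ptr
end RubikAux5

open InfRubik in
/-- The universally convergent basic sequences on the edgeless cube modulo `∼`, with the
operation induced by concatenation, form a group extending the group generated by the
finite basic sequences; with `k` the least common multiple of the orders of the elements
of `S₂₄`, the `(k-1)`-fold self-concatenation of a universally convergent sequence is
universally convergent and represents a two-sided inverse (so `σ⃗^k ∼ ε` and every
element of the quotient group has order at most `k`). -/
theorem univConv_quotient_group {L : Type u} [Infinite L]
    (k : ℕ) (hk : k = (Finset.univ : Finset (Equiv.Perm (Fin 24))).lcm orderOf) :
    -- the universally convergent sequences are closed under concatenation
    (∀ s t : BasicSeq L, s.UnivConv → t.UnivConv → (s.concat t).UnivConv) ∧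
    -- concatenation is a congruence with respect to ∼ (so it induces an operation on the
    -- quotient, which is a monoid)
    (∀ s s' t t' : BasicSeq L, s.UnivConv → t.UnivConv → s.Sim s' → t.Sim t' →
      (s.concat t).Sim (s'.concat t')) ∧
    -- the quotient extends the group generated by the finite basic sequences
    (∀ s : BasicSeq L, s.len < Ordinal.omega0 → s.UnivConv) ∧
    -- existence of inverses: σ⃗^{k-1} is universally convergent, σ⃗^k ∼ ε, and σ⃗^{k-1}
    -- is a two-sided inverse of σ⃗
    (∀ s : BasicSeq L, s.UnivConv →
      (s.npow (k - 1)).UnivConv ∧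
      (s.npow k).Sim (TwistSeq.empty (Cell L) (IsBasic L)) ∧
      ((s.npow (k - 1)).concat s).Sim (TwistSeq.empty (Cell L) (IsBasic L)) ∧
      (s.concat (s.npow (k - 1))).Sim (TwistSeq.empty (Cell L) (IsBasic L))) := by
  classical
  have hk0 : k ≠ 0 := by
    rw [hk]
    intro h0
    rw [Finset.lcm_eq_zero_iff] at h0
    obtain ⟨x, -, hx⟩ := h0
    exact (orderOf_pos x).ne' hx
  have hmv : ∀ (s : BasicSeq L) (c0 : Cell L), ∀ η, η < s.len →
      ∀ c ∈ RubikAux5.KCset c0, s.seq η c ∈ RubikAux5.KCset c0 ∧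
        (s.seq η)⁻¹ c ∈ RubikAux5.KCset c0 :=
    fun s c0 η hη c hc => RubikAux5.KC_basic c0 _ (s.basic η hη) c hc
  -- the key structural result: every universally convergent sequence acts as a
  -- function `H` of order dividing `k`
  have main : ∀ s : BasicSeq L, s.UnivConv → ∃ H : Cell L → Cell L,
      (∀ c, s.terminal (fun x => some x) c = some (H c)) ∧ ∀ c, H^[k] c = c := by
    intro s hs
    choose H hH using fun c => Option.ne_none_iff_exists'.mp (hs c)
    refine ⟨H, hH, ?_⟩
    intro c0
    obtain ⟨hfin, hcard⟩ := RubikAux5.KCset_finite_card c0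
    have hleg : ∀ η, η ≤ s.len → ∀ c ∈ RubikAux5.KCset c0,
        run s.seq (fun x => some x) η c ≠ none := by
      intro η hη c hc hnone
      obtain ⟨c', hc', hn'⟩ := RubikAux3.persist s.seq s.len _ hfin (hmv s c0)
        s.len le_rfl η hη ⟨c, hc, hnone⟩
      exact hs c' hn'
    obtain ⟨e, hbij, hval⟩ := RubikAux3.exists_bij s.seq s.len _ hfin (hmv s c0)
      hleg s.len le_rfl
    have hHe : ∀ c ∈ RubikAux5.KCset c0, H c = e c := by
      intro c hc
      exact Option.some_inj.1 ((hH c).symm.trans (hval c hc))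
    exact RubikAux3.iterate_eq_id k hk _ hfin hcard e H hbij hHe c0
      (RubikAux5.mem_KCset_self c0)
  refine ⟨?_, ?_, ?_, ?_⟩
  · -- closure under concatenation
    intro s t hs ht c
    obtain ⟨d, hd⟩ := Option.ne_none_iff_exists'.mp (ht c)
    show (s.concat t).terminal _ c ≠ none
    rw [RubikAux2.terminal_concat, RubikAux2.terminal_eq t hd]
    exact hs d
  · -- congruence
    intro s s' t t' _ _ hss htt f
    show (s.concat t).terminal f = (s'.concat t').terminal f
    rw [RubikAux2.terminal_concat, RubikAux2.terminal_concat, ← hss f]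
    exact htt (s.terminal f)
  · -- finite sequences converge
    intro s hlen c
    obtain ⟨n, hn⟩ := Ordinal.lt_omega0.1 hlen
    suffices h : ∀ (m : ℕ) (c : Cell L), run s.seq (fun x => some x) (m : Ordinal) c ≠ none by
      show run s.seq _ s.len c ≠ none
      rw [hn]
      exact h n c
    intro m
    induction m with
    | zero =>
      intro c
      rw [show ((0 : ℕ) : Ordinal) = 0 by simp, RubikAux.run_zero]
      simp
    | succ m ih =>
      intro c
      rw [show ((m + 1 : ℕ) : Ordinal) = (m : Ordinal) + 1 from Nat.cast_succ m,
        RubikAux.run_succ_apply]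
      exact ih _
  · -- inverses
    intro s hs
    obtain ⟨H, hH, hHk⟩ := main s hs
    have hnpow : ∀ n : ℕ, ∀ c, (s.npow n).terminal (fun x => some x) c = some (H^[n] c) := by
      intro n
      induction n with
      | zero =>
        intro c
        show run _ _ (0 : Ordinal) c = _
        rw [RubikAux.run_zero]
        rfl
      | succ n ih =>
        intro c
        show ((s.npow n).concat s).terminal _ c = _
        rw [RubikAux2.terminal_concat, RubikAux2.terminal_eq s (hH c), ih (H c),
          ← Function.iterate_succ_apply]
    have hk1 : k - 1 + 1 = k := Nat.succ_pred_eq_of_pos (Nat.pos_of_ne_zero hk0)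
    refine ⟨?_, ?_, ?_, ?_⟩
    · intro c
      rw [hnpow]
      simp
    · intro f
      funext c
      have h1 : (s.npow k).terminal (fun x => some x) c = some c := by
        rw [hnpow, hHk]
      rw [RubikAux2.terminal_eq (s.npow k) h1 f]
      show f c = run _ f (0 : Ordinal) c
      rw [RubikAux.run_zero]
    · intro f
      funext c
      rw [RubikAux2.terminal_concat, RubikAux2.terminal_eq s (hH c),
        RubikAux2.terminal_eq (s.npow (k - 1)) (hnpow (k - 1) (H c)),
        ← Function.iterate_succ_apply, Nat.succ_eq_add_one, hk1, hHk]
      show f c = run _ f (0 : Ordinal) c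
      rw [RubikAux.run_zero]
    · intro f
      funext c
      rw [RubikAux2.terminal_concat, RubikAux2.terminal_eq (s.npow (k - 1)) (hnpow (k - 1) c),
        RubikAux2.terminal_eq s (hH (H^[k - 1] c))]
      have hit : H (H^[k - 1] c) = H^[k] c := by
        conv_rhs => rw [← hk1]
        rw [Function.iterate_succ_apply']
      rw [hit, hHk]
      show f c = run _ f (0 : Ordinal) c
      rw [RubikAux.run_zero]
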